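/- Let f : ℝⁿ → ℝ be proper, convex and lower semicontinuous, and fix x ∈ ℝⁿ. Then the function h₄(τ) = ‖x - prox_{τf}(x)‖₂² is nondecreasing on τ ∈ (0, ∞). -/

import Mathlib

/-- τ ↦ ‖x - prox_{τf}(x)‖² is nondecreasing on (0, ∞). -/
theorem prox_residual_monotone {n : ℕ} (f : EuclideanSpace ℝ (Fin n) → ℝ)
    (hf_conv : ConvexOn ℝ Set.univ f) (hf_lsc : LowerSemicontinuous f)
    (P : ℝ → EuclideanSpace ℝ (Fin n) → EuclideanSpace ℝ (Fin n))
    (hP : ∀ τ ∈ Set.Ioi (0 : ℝ), ∀ x,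
      IsMinOn (fun z => f z + (1 / (2 * τ)) * ‖x - z‖ ^ 2) Set.univ (P τ x))
    (x : EuclideanSpace ℝ (Fin n)) :
    MonotoneOn (fun τ : ℝ => ‖x - P τ x‖ ^ 2) (Set.Ioi 0) := by
  intro a ha b hb hab
  rcases eq_or_lt_of_le hab with rfl | hlt
  · exact le_refl _
  · have ha' : (0:ℝ) < a := ha
    have hb' : (0:ℝ) < b := hb
    have h1 := (isMinOn_iff.mp (hP a ha x)) (P b x) (Set.mem_univ _)
    have h2 := (isMinOn_iff.mp (hP b hb x)) (P a x) (Set.mem_univ _)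
    have hA : (0:ℝ) ≤ ‖x - P a x‖ ^ 2 := sq_nonneg _
    have hB : (0:ℝ) ≤ ‖x - P b x‖ ^ 2 := sq_nonneg _
    have key : (1 / (2 * a) - 1 / (2 * b)) * ‖x - P a x‖ ^ 2 ≤
        (1 / (2 * a) - 1 / (2 * b)) * ‖x - P b x‖ ^ 2 := by linarith
    have hc : (0:ℝ) < 1 / (2 * a) - 1 / (2 * b) := by
      rw [sub_pos, div_lt_div_iff₀ (by positivity) (by positivity)]
      linarith
    exact le_of_mul_le_mul_left key hc
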